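/- arXiv:1404.4487 — 3 statements merged into one kernel-verified Lean document; each statement's English description precedes it below -/
import Mathlib

section
/- Let γ be a hyperbolic isometry of the upper half-plane whose axis is the Euclidean semicircle of radius r > 0 centered at the origin, with translation length d along its axis. If θ ∈ (0, π/2) denotes the angle such that sinh(d/2) = tan θ, then the Euclidean radius R of the isometric circle of γ satisfies r = R tan θ; equivalently R = r / sinh(d/2). -/
/-- Let `γ(z) = (az+b)/(cz+d)` be a hyperbolic isometry of the upper half-plane whose axis is
the semicircle of radius `r > 0` centered at `0` (i.e. `γ` fixes `±r`), with translation
length `D` (so `cosh(D/2) = |a+d|/2`).  If `θ ∈ (0, π/2)` satisfies `sinh(D/2) = tan θ`,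
then the radius `R = 1/|c|` of the isometric circle of `γ` satisfies `r = R·tan θ`;
equivalently `R = r / sinh(D/2)`. -/
theorem isometric_circle_radius_of_axis (a b c d r D θ : ℝ)
    (hdet : a * d - b * c = 1) (hc : c ≠ 0) (hr : 0 < r)
    (hfix1 : a * r + b = r * (c * r + d))
    (hfix2 : a * (-r) + b = (-r) * (c * (-r) + d))
    (hD : 0 < D) (htrace : Real.cosh (D / 2) = |a + d| / 2)
    (hθ : θ ∈ Set.Ioo 0 (Real.pi / 2)) (hθD : Real.sinh (D / 2) = Real.tan θ) :
    r = (1 / |c|) * Real.tan θ ∧ 1 / |c| = r / Real.sinh (D / 2) := by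
  have had : a = d := by nlinarith [hfix1, hfix2, hr]
  have hb : b = c * r ^ 2 := by nlinarith [hfix1, hfix2, hr]
  have hsq : Real.sinh (D / 2) ^ 2 = (|c| * r) ^ 2 := by
    have h1 : Real.sinh (D / 2) ^ 2 = Real.cosh (D / 2) ^ 2 - 1 := by
      have := Real.cosh_sq (D / 2); linarith
    rw [h1, htrace]
    have habs : (|a + d| / 2) ^ 2 = ((a + d) / 2) ^ 2 := by
      rw [div_pow, div_pow, sq_abs]
    rw [habs]
    have : (|c| * r) ^ 2 = c ^ 2 * r ^ 2 := by rw [mul_pow, sq_abs]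
    rw [this]
    subst had; subst hb
    linear_combination hdet
  have hsinh_pos : 0 < Real.sinh (D / 2) := Real.sinh_pos_iff.2 (by linarith)
  have hcr : 0 ≤ |c| * r := mul_nonneg (abs_nonneg c) hr.le
  have hsinh : Real.sinh (D / 2) = |c| * r := by
    nlinarith [hsinh_pos, hcr, hsq]
  have hcabs : (0:ℝ) < |c| := abs_pos.2 hc
  constructor
  · rw [← hθD, hsinh]; field_simp
  · rw [hsinh]; field_simp
end

section
/- Let Γ be a Fuchsian group containing the parabolic T(z) = z + ω (ω > 0), such that the horodisc B = {z : Im z > 1} satisfies γ(B) ∩ B = ∅ for all γ ∈ Γ not fixing ∞. Let γ ∈ Γ be a hyperbolic element whose axis is the semicircle of radius r centered at 0 and which enters B (so r > 1). Then for any z₀ with Im(z₀) ≥ √3, one has sinh(d(z₀, γ·z₀)/2) > 2/√3. -/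
private lemma disp_aux1 (x y r : ℝ) (hy0 : 0 < y) (hy3 : 3 ≤ y ^ 2) (hr : 1 < r) :
    16 * y ^ 2 / 3 < (x ^ 2 - y ^ 2 - r ^ 2) ^ 2 + (2 * x * y) ^ 2 := by
  have hr0 : (0:ℝ) < r := lt_trans one_pos hr
  have e1 : (x ^ 2 - y ^ 2 - r ^ 2) ^ 2 + (2 * x * y) ^ 2
      = (x ^ 2 - (r ^ 2 - y ^ 2)) ^ 2 + 4 * r ^ 2 * y ^ 2 := by ring
  rw [e1]
  rcases le_or_gt (y ^ 2) (r ^ 2) with h | h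
  · nlinarith [sq_nonneg (x ^ 2 - (r ^ 2 - y ^ 2)), hy3, h,
      mul_nonneg (sub_nonneg.2 (le_trans hy3 h)) (sq_nonneg y)]
  · have h2 : (y ^ 2 - r ^ 2) ^ 2 ≤ (x ^ 2 - (r ^ 2 - y ^ 2)) ^ 2 := by
      apply pow_le_pow_left₀ (by nlinarith) (by nlinarith [sq_nonneg x])
    have hr2 : 1 < r ^ 2 := by nlinarith
    nlinarith [h2, hr2, hy3, mul_nonneg (by nlinarith : (0:ℝ) ≤ 3 * y ^ 2 - 1)
      (by linarith : (0:ℝ) ≤ y ^ 2 - 3)]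

set_option maxHeartbeats 1000000 in
set_option maxHeartbeats 1000000 in
/-- Let `Γ` be a Fuchsian (discrete) group containing the parabolic `T(z) = z + ω` (`ω > 0`),
such that the horodisc `B = {Im z > 1}` satisfies `γ(B) ∩ B = ∅` for all `γ ∈ Γ` not fixing
`∞`.  If `g ∈ Γ` is a hyperbolic element whose axis is the semicircle of radius `r` centered
at `0` (i.e. `g` fixes `±r`) entering `B` (so `r > 1`), then for any `z₀` with `Im z₀ ≥ √3`
one has `sinh(dist(z₀, g·z₀)/2) > 2/√3`. -/
theorem displacement_lower_bound (Γ : Subgroup (Matrix.SpecialLinearGroup (Fin 2) ℝ))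
    (hdiscrete : DiscreteTopology
      ((Subtype.val '' (Γ : Set (Matrix.SpecialLinearGroup (Fin 2) ℝ))) :
        Set (Matrix (Fin 2) (Fin 2) ℝ)))
    (ω : ℝ) (hω : 0 < ω)
    (T : Matrix.SpecialLinearGroup (Fin 2) ℝ) (hT : T.1 = !![1, ω; 0, 1]) (hTΓ : T ∈ Γ)
    (hdisj : ∀ g ∈ Γ, g.1 1 0 ≠ 0 → ∀ z : UpperHalfPlane, 1 < z.im → (g • z).im ≤ 1)
    (g : Matrix.SpecialLinearGroup (Fin 2) ℝ) (hg : g ∈ Γ) (hgc : g.1 1 0 ≠ 0)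
    (hhyp : 2 < |g.1 0 0 + g.1 1 1|)
    (r : ℝ) (hr : 1 < r)
    (hfix1 : g.1 0 0 * r + g.1 0 1 = r * (g.1 1 0 * r + g.1 1 1))
    (hfix2 : g.1 0 0 * (-r) + g.1 0 1 = (-r) * (g.1 1 0 * (-r) + g.1 1 1))
    (z₀ : UpperHalfPlane) (hz₀ : Real.sqrt 3 ≤ z₀.im) :
    2 / Real.sqrt 3 < Real.sinh (dist z₀ (g • z₀) / 2) := by
  set a : ℝ := g.1 0 0 with ha
  set b : ℝ := g.1 0 1 with hb
  set c : ℝ := g.1 1 0 with hc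
  set d : ℝ := g.1 1 1 with hd
  have hr0 : (0:ℝ) < r := lt_trans one_pos hr
  have hdet : a * d - b * c = 1 := by
    have := g.2
    rw [Matrix.det_fin_two] at this
    linarith [this]
  -- from the fixed points: d = a, b = c * r²
  have hda : d = a := by nlinarith [hfix1, hfix2]
  have hbc : b = c * r ^ 2 := by nlinarith [hfix1, hfix2]
  -- coercion formula
  have hcoe : ∀ z : UpperHalfPlane, ((g • z : UpperHalfPlane) : ℂ)
      = ((a : ℂ) * z + b) / ((c : ℂ) * z + d) := by
    intro z
    rw [UpperHalfPlane.specialLinearGroup_apply]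
    simp [ha, hb, hc, hd]
  -- imaginary part formula
  have hQpos : ∀ z : UpperHalfPlane, 0 < (c * z.re + d) ^ 2 + (c * z.im) ^ 2 := by
    intro z
    have : c * z.im ≠ 0 := mul_ne_zero hgc (ne_of_gt z.2)
    positivity
  have him : ∀ z : UpperHalfPlane,
      (g • z).im = z.im / ((c * z.re + d) ^ 2 + (c * z.im) ^ 2) := by
    intro z
    have h1 : (g • z).im = (((a : ℂ) * z + b) / ((c : ℂ) * z + d)).im := by
      rw [← UpperHalfPlane.coe_im, hcoe z]
    rw [h1, Complex.div_im]
    have hns : Complex.normSq ((c : ℂ) * z + d) = (c * z.re + d) ^ 2 + (c * z.im) ^ 2 := by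
      simp [Complex.normSq_apply, UpperHalfPlane.coe_re, UpperHalfPlane.coe_im]
      ring
    rw [hns]
    have hre1 : ((a : ℂ) * z + b).re = a * z.re + b := by
      simp [UpperHalfPlane.coe_re]
    have him1 : ((a : ℂ) * z + b).im = a * z.im := by
      simp [UpperHalfPlane.coe_im]
    have hre2 : ((c : ℂ) * z + d).re = c * z.re + d := by
      simp [UpperHalfPlane.coe_re]
    have him2 : ((c : ℂ) * z + d).im = c * z.im := by
      simp [UpperHalfPlane.coe_im]
    rw [hre1, him1, hre2, him2]
    have hQ := (hQpos z).ne'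
    field_simp
    linear_combination hdet
  -- |c| ≥ 1
  have hc1 : 1 ≤ c ^ 2 := by
    by_contra hlt
    push_neg at hlt
    have hc2 : 0 < c ^ 2 := by positivity
    have key : ∀ t : ℝ, 1 < t → 1 ≤ c ^ 2 * t := by
      intro t ht
      set z : UpperHalfPlane := ⟨⟨-d / c, t⟩, by simpa using lt_trans one_pos ht⟩ with hz
      have hzre : z.re = -d / c := rfl
      have hzim : z.im = t := rfl
      have := hdisj g hg hgc z (by rw [hzim]; exact ht)
      rw [him z, hzre, hzim] at this
      have hcd : c * (-d / c) + d = 0 := by field_simp; ring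
      rw [hcd] at this
      have ht0 : 0 < t := lt_trans one_pos ht
      have hden : (0:ℝ) < 0 ^ 2 + (c * t) ^ 2 := by
        have : c * t ≠ 0 := mul_ne_zero hgc (ne_of_gt ht0)
        positivity
      rw [div_le_one hden] at this
      nlinarith [this]
    have h1 : (1:ℝ) < (1 + 1 / c ^ 2) / 2 := by
      rw [lt_div_iff₀ (by norm_num : (0:ℝ) < 2)]
      have : 1 < 1 / c ^ 2 := by
        rw [lt_div_iff₀ hc2]; linarith
      linarith
    have h2 := key _ h1
    have : c ^ 2 * ((1 + 1 / c ^ 2) / 2) = (c ^ 2 + 1) / 2 := by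
      field_simp
    rw [this] at h2
    linarith
  have habs : 1 ≤ |c| := by
    nlinarith [sq_abs c, abs_nonneg c]
  -- sinh formula
  set x : ℝ := z₀.re with hx
  set y : ℝ := z₀.im with hy
  have hy0 : 0 < y := z₀.2
  set Q : ℝ := (c * x + d) ^ 2 + (c * y) ^ 2 with hQ
  have hQ0 : 0 < Q := hQpos z₀
  have hdenne : ((c : ℂ) * z₀ + d) ≠ 0 := by
    intro h
    have : ((c : ℂ) * z₀ + d).im = 0 := by rw [h]; simp
    simp [UpperHalfPlane.coe_im] at this
    rcases this with h | h
    · exact hgc h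
    · exact (ne_of_gt hy0) h
  have hdiff : (z₀ : ℂ) - ((g • z₀ : UpperHalfPlane) : ℂ)
      = (c : ℂ) * (((z₀ : ℂ)) ^ 2 - (r : ℂ) ^ 2) / ((c : ℂ) * z₀ + d) := by
    rw [hcoe z₀]
    rw [eq_div_iff hdenne, sub_mul, div_mul_cancel₀ _ hdenne]
    rw [hda, hbc]
    push_cast
    ring
  set M : ℝ := ‖(((z₀ : ℂ)) ^ 2 - (r : ℂ) ^ 2)‖ with hM
  have hM0 : 0 ≤ M := norm_nonneg _
  have hnsQ : Complex.normSq ((c : ℂ) * z₀ + d) = Q := by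
    simp [Complex.normSq_apply, UpperHalfPlane.coe_re, UpperHalfPlane.coe_im, hQ, hx, hy]
    ring
  have hsq : ‖(c : ℂ) * z₀ + d‖ = Real.sqrt Q := by
    rw [← Real.sqrt_sq (norm_nonneg ((c : ℂ) * z₀ + d)), Complex.sq_norm, hnsQ]
  have hsinh : Real.sinh (dist z₀ (g • z₀) / 2) = |c| * M / (2 * y) := by
    rw [UpperHalfPlane.sinh_half_dist]
    rw [Complex.dist_eq, hdiff]
    rw [norm_div, norm_mul, hsq]
    rw [him z₀]
    have h1 : y * (y / Q) = (y / Real.sqrt Q) ^ 2 := by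
      rw [div_pow, Real.sq_sqrt hQ0.le]
      ring
    rw [← hx, ← hy, ← hQ, h1, Real.sqrt_sq (by positivity)]
    rw [Complex.norm_real, Real.norm_eq_abs, ← hM]
    have hsQ0 : 0 < Real.sqrt Q := Real.sqrt_pos.mpr hQ0
    field_simp
  -- M² formula
  have hMsq : M ^ 2 = (x ^ 2 - y ^ 2 - r ^ 2) ^ 2 + (2 * x * y) ^ 2 := by
    rw [hM, Complex.sq_norm, Complex.normSq_apply]
    simp [Complex.sub_re, Complex.sub_im, pow_two, Complex.mul_re, Complex.mul_im,
      UpperHalfPlane.coe_re, UpperHalfPlane.coe_im, ← hx, ← hy]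
    ring
  have hs3 : (0:ℝ) < Real.sqrt 3 := by positivity
  have hs3sq : Real.sqrt 3 ^ 2 = 3 := Real.sq_sqrt (by norm_num)
  have hy3 : 3 ≤ y ^ 2 := by
    have h := pow_le_pow_left₀ hs3.le hz₀ 2
    rwa [hs3sq] at h
  have hkey : 16 * y ^ 2 / 3 < M ^ 2 := by
    rw [hMsq]; exact disp_aux1 x y r hy0 hy3 hr
  have h4 : 4 * y / Real.sqrt 3 < M := by
    have ha0 : 0 ≤ 4 * y / Real.sqrt 3 := by positivity
    have hsq4 : (4 * y / Real.sqrt 3) ^ 2 = 16 * y ^ 2 / 3 := by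
      rw [div_pow, hs3sq]; ring
    have := hkey
    rw [← hsq4] at this
    exact lt_of_pow_lt_pow_left₀ 2 hM0 this
  rw [hsinh, lt_div_iff₀ (by positivity : (0:ℝ) < 2 * y)]
  calc 2 / Real.sqrt 3 * (2 * y) = 4 * y / Real.sqrt 3 := by ring
    _ < M := h4
    _ ≤ |c| * M := le_mul_of_one_le_left hM0 habs
end

section
/- Let Γ be a Fuchsian group with parabolic stabilizer of ∞ generated by z ↦ z + ω (ω > 0), and suppose {z : Im z > 1} projects injectively (modulo the stabilizer) to a cusp region. Then any complete geodesic of ℍ that projects to a simple closed geodesic on ℍ/Γ does not enter the horodisc {z : Im z > √(1 + ω²/4)}. -/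
/-- Let `Γ` be a Fuchsian group whose stabilizer of `∞` is generated (up to sign) by
`T : z ↦ z + ω` (`ω > 0`), and such that `{Im z > 1}` projects injectively modulo the
stabilizer to a cusp region (any `g ∈ Γ` sending a point of `{Im z > 1}` into `{Im z > 1}`
fixes `∞`).  Then any complete geodesic of `ℍ` (a semicircle `{|z - m| = ρ}`) invariant
under some hyperbolic element of `Γ` and projecting to a *simple* closed geodesic (its
`Γ`-translates are equal to it or disjoint from it) does not enter the horodisc
`{Im z > √(1 + ω²/4)}`. -/
theorem simple_geodesic_avoids_cusp (Γ : Subgroup (Matrix.SpecialLinearGroup (Fin 2) ℝ))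
    (hdiscrete : DiscreteTopology
      ((Subtype.val '' (Γ : Set (Matrix.SpecialLinearGroup (Fin 2) ℝ))) :
        Set (Matrix (Fin 2) (Fin 2) ℝ)))
    (ω : ℝ) (hω : 0 < ω)
    (T : Matrix.SpecialLinearGroup (Fin 2) ℝ) (hT : T.1 = !![1, ω; 0, 1]) (hTΓ : T ∈ Γ)
    (hstab : ∀ g ∈ Γ, g.1 1 0 = 0 → ∃ n : ℤ, g = T ^ n ∨ g = -(T ^ n))
    (hinj : ∀ g ∈ Γ, ∀ z : UpperHalfPlane, 1 < z.im → 1 < (g • z).im → g.1 1 0 = 0)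
    (m ρ : ℝ) (hρ : 0 < ρ)
    (S : Set UpperHalfPlane) (hS : S = {z : UpperHalfPlane | ‖(z : ℂ) - (m : ℂ)‖ = ρ})
    (hclosed : ∃ h : Matrix.SpecialLinearGroup (Fin 2) ℝ, h ∈ Γ ∧
      2 < |h.1 0 0 + h.1 1 1| ∧ (fun z : UpperHalfPlane => h • z) '' S = S)
    (hsimple : ∀ g ∈ Γ,
      (fun z : UpperHalfPlane => g • z) '' S = S ∨
        Disjoint ((fun z : UpperHalfPlane => g • z) '' S) S) :
    ∀ z ∈ S, z.im ≤ Real.sqrt (1 + ω ^ 2 / 4) := by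
  have hTz : ∀ z : UpperHalfPlane, ((T • z : UpperHalfPlane) : ℂ) = (z : ℂ) + ω := by
    intro z
    rw [UpperHalfPlane.specialLinearGroup_apply]
    have h00 : T 0 0 = 1 := by rw [show (T 0 0) = T.1 0 0 from rfl, hT]; simp
    have h01 : T 0 1 = ω := by rw [show (T 0 1) = T.1 0 1 from rfl, hT]; simp
    have h10 : T 1 0 = 0 := by rw [show (T 1 0) = T.1 1 0 from rfl, hT]; simp
    have h11 : T 1 1 = 1 := by rw [show (T 1 1) = T.1 1 1 from rfl, hT]; simp
    simp [h00, h01, h10, h11]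
  -- membership in S rephrased
  have hmem : ∀ z : UpperHalfPlane, z ∈ S ↔ ‖(z : ℂ) - (m : ℂ)‖ = ρ := by
    intro z; rw [hS]; rfl
  have key : ρ ≤ ω / 2 := by
    rcases hsimple T hTΓ with hEq | hDis
    · exfalso
      have hz1 : (0:ℝ) < (Complex.mk m ρ).im := hρ
      set z1 : UpperHalfPlane := ⟨Complex.mk m ρ, hz1⟩ with hz1def
      have hz1S : z1 ∈ S := by
        rw [hmem]
        have : (z1 : ℂ) - (m : ℂ) = Complex.mk 0 ρ := by
          apply Complex.ext <;> simp [hz1def, Complex.ext_iff]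
        rw [this, Complex.norm_def, Complex.normSq_mk]
        rw [show (0:ℝ) * 0 + ρ * ρ = ρ ^ 2 by ring, Real.sqrt_sq hρ.le]
      rw [← hEq] at hz1S
      obtain ⟨w, hwS, hTw⟩ := hz1S
      have hwc : (w : ℂ) = Complex.mk (m - ω) ρ := by
        have h1 : ((T • w : UpperHalfPlane) : ℂ) = (w : ℂ) + ω := hTz w
        have h2 : ((T • w : UpperHalfPlane) : ℂ) = Complex.mk m ρ := by
          rw [show (T • w : UpperHalfPlane) = z1 from hTw]
        have : (w : ℂ) = Complex.mk m ρ - ω := by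
          rw [← h2, h1]; ring
        rw [this]; apply Complex.ext <;> simp
      rw [hmem] at hwS
      have : (w : ℂ) - (m : ℂ) = Complex.mk (-ω) ρ := by
        rw [hwc]; apply Complex.ext <;> simp
      rw [this, Complex.norm_def, Complex.normSq_mk] at hwS
      have h3 : -ω * -ω + ρ * ρ = ρ ^ 2 := by
        have := Real.sqrt_eq_iff_eq_sq (by nlinarith) hρ.le |>.mp hwS
        nlinarith [Real.sq_sqrt (show (0:ℝ) ≤ -ω * -ω + ρ * ρ by nlinarith), hwS,
          Real.sqrt_nonneg (-ω * -ω + ρ * ρ)]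
      nlinarith
    · by_contra hlt
      push_neg at hlt
      set y := Real.sqrt (ρ ^ 2 - ω ^ 2 / 4) with hydef
      have hy : 0 < y := Real.sqrt_pos.mpr (by nlinarith)
      have hy2 : y ^ 2 = ρ ^ 2 - ω ^ 2 / 4 := Real.sq_sqrt (by nlinarith)
      set z0 : UpperHalfPlane := ⟨Complex.mk (m + ω / 2) y, hy⟩ with hz0def
      set w0 : UpperHalfPlane := ⟨Complex.mk (m - ω / 2) y, hy⟩ with hw0def
      have habs : ∀ a : ℝ, ‖Complex.mk a y‖ = ρ → True := fun _ _ => trivial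
      have hcirc : ∀ a : ℝ, a * a = ω ^ 2 / 4 →
          ‖Complex.mk a y‖ = ρ := by
        intro a ha
        rw [Complex.norm_def, Complex.normSq_mk, ha,
          show ω ^ 2 / 4 + y * y = ρ ^ 2 by nlinarith, Real.sqrt_sq hρ.le]
      have hz0S : z0 ∈ S := by
        rw [hmem]
        have : (z0 : ℂ) - (m : ℂ) = Complex.mk (ω / 2) y := by
          apply Complex.ext <;> simp [hz0def]
        rw [this]; exact hcirc _ (by ring)
      have hw0S : w0 ∈ S := by
        rw [hmem]
        have : (w0 : ℂ) - (m : ℂ) = Complex.mk (-(ω / 2)) y := by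
          apply Complex.ext <;> simp [hw0def]
        rw [this]; exact hcirc _ (by ring)
      have hTw0 : T • w0 = z0 := by
        apply UpperHalfPlane.ext
        rw [hTz w0]
        apply Complex.ext <;> simp [hw0def, hz0def]
        ring
      exact Set.disjoint_left.mp hDis ⟨w0, hw0S, hTw0⟩ hz0S
  intro z hz
  rw [hmem] at hz
  have him : z.im ≤ ρ := by
    have h1 : z.im = ((z : ℂ) - (m : ℂ)).im := by
      rw [Complex.sub_im, Complex.ofReal_im, UpperHalfPlane.coe_im, sub_zero]
    calc z.im = ((z : ℂ) - (m : ℂ)).im := h1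
      _ ≤ |((z : ℂ) - (m : ℂ)).im| := le_abs_self _
      _ ≤ ‖(z : ℂ) - (m : ℂ)‖ := Complex.abs_im_le_norm _
      _ = ρ := hz
  have h2 : ω / 2 ≤ Real.sqrt (1 + ω ^ 2 / 4) := by
    rw [show ω / 2 = Real.sqrt ((ω / 2) ^ 2) from (Real.sqrt_sq (by linarith)).symm]
    apply Real.sqrt_le_sqrt; nlinarith
  linarith
end
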